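/- Let q, p, u, v : ℝ → ℝ be differentiable functions satisfying, for every s ∈ ℝ: q′(s) = p(s) − q(s)·u(s), u′(s) = −q(s)², and v′(s) = −p(s)·q(s). Then the function s ↦ u(s)² − 2·v(s) − q(s)² is constant. In particular, if u(s)² − 2v(s) − q(s)² tends to 0 as s → ∞, then u(s)² − 2v(s) = q(s)² for all s. -/

import Mathlib

open Filter

/-- First integral of the coupled system in the Painlevé II derivation:
`u² − 2v − q²` is constant, and if it tends to `0` at `+∞` then `u² − 2v = q²`. -/
theorem first_integral (q p u v : ℝ → ℝ)
    (hq : Differentiable ℝ q) (hp : Differentiable ℝ p)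
    (hu : Differentiable ℝ u) (hv : Differentiable ℝ v)
    (hq' : ∀ s : ℝ, deriv q s = p s - q s * u s)
    (hu' : ∀ s : ℝ, deriv u s = -(q s) ^ 2)
    (hv' : ∀ s : ℝ, deriv v s = -(p s * q s)) :
    (∃ c : ℝ, ∀ s : ℝ, u s ^ 2 - 2 * v s - q s ^ 2 = c) ∧
    (Tendsto (fun s : ℝ => u s ^ 2 - 2 * v s - q s ^ 2) atTop (nhds 0) →
      ∀ s : ℝ, u s ^ 2 - 2 * v s = q s ^ 2) := by
  set F : ℝ → ℝ := fun s => u s ^ 2 - 2 * v s - q s ^ 2 with hF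
  have hFdiff : Differentiable ℝ F := by
    fun_prop
  have hFderiv : ∀ s, deriv F s = 0 := by
    intro s
    have h1 : HasDerivAt u (-(q s) ^ 2) s := hu' s ▸ (hu s).hasDerivAt
    have h2 : HasDerivAt v (-(p s * q s)) s := hv' s ▸ (hv s).hasDerivAt
    have h3 : HasDerivAt q (p s - q s * u s) s := hq' s ▸ (hq s).hasDerivAt
    have : HasDerivAt F (2 * u s * (-(q s) ^ 2) - 2 * (-(p s * q s))
        - 2 * q s * (p s - q s * u s)) s := by
      simpa using (((h1.fun_pow 2).fun_sub ((h2.const_mul 2))).fun_sub (h3.fun_pow 2)).congr_deriv (by ring)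
    rw [this.deriv]; ring
  have hconst : ∀ x y : ℝ, F x = F y := fun x y =>
    is_const_of_deriv_eq_zero hFdiff hFderiv x y
  refine ⟨⟨F 0, fun s => hconst s 0⟩, fun htend s => ?_⟩
  have : Tendsto (fun _ : ℝ => F s) atTop (nhds (F s)) := tendsto_const_nhds
  have hFs : F s = 0 := by
    have heq : (fun t : ℝ => F t) = fun _ : ℝ => F s := funext fun t => hconst t s
    have := htend
    rw [hF] at this
    have : Tendsto (fun _ : ℝ => F s) atTop (nhds 0) := by rwa [← heq]
    exact tendsto_nhds_unique tendsto_const_nhds this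
  have := hFs
  simp only [hF] at this
  linarith
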